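/- Let A be a unital C*-algebra regarded as a Hilbert module over itself with inner product ⟨a,b⟩ = a*b. Then for every adjointable operator T on A, the numerical radius equals the norm: w(T) = ‖T‖. -/

import Mathlib

open scoped ComplexOrder RightActions

noncomputable section

variable {A : Type*} [CStarAlgebra A] [PartialOrder A] [StarOrderedRing A]

/-- A state on the C*-algebra `A`: a norm-one functional that is positive. -/
def IsState (ρ : A →L[ℂ] ℂ) : Prop :=
  ‖ρ‖ = 1 ∧ ∀ a : A, 0 ≤ ρ (star a * a)

/-- The numerical radius `w(T)` of an operator on `A`, regarded as a Hilbert module over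
itself via `⟪a, b⟫ = a* b`. -/
def numRadius (T : A →L[ℂ] A) : ℝ :=
  sSup {r : ℝ | ∃ b : A, ‖b‖ = 1 ∧ r = ‖(inner A (T b) b : A)‖}

/-- For every adjointable operator `T` on a unital C*-algebra `A` regarded as a Hilbert module
over itself, `w(T) = ‖T‖`. -/
theorem numRadius_eq_norm_of_unital (T Tadj : A →L[ℂ] A)
    (hT : ∀ x y : A, (inner A (T x) y : A) = inner A x (Tadj y)) :
    numRadius T = ‖T‖ := by
  have hinner : ∀ x y : A, (inner A x y : A) = y * star x := fun _ _ => rfl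
  rcases subsingleton_or_nontrivial A with hA | hA
  · have hT0 : T = 0 := Subsingleton.elim _ _
    have hset : {r : ℝ | ∃ b : A, ‖b‖ = 1 ∧ r = ‖(inner A (T b) b : A)‖} = ∅ := by
      ext r
      simp only [Set.mem_setOf_eq, Set.mem_empty_iff_false, iff_false]
      rintro ⟨b, hb, -⟩
      have : b = 0 := Subsingleton.elim _ _
      simp [this] at hb
    rw [numRadius, hset, Real.sSup_empty, hT0, norm_zero]
  · -- T is left multiplication by T 1
    have hmul : ∀ a : A, T a = a * T 1 := by
      intro a
      set d : A := T a - a * T 1 with hd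
      have key : ∀ y : A, y * star d = 0 := by
        intro y
        have h1 : y * star (T a) = Tadj y * star a := by
          simpa [hinner] using hT a y
        have h2 : y * star (T 1) = Tadj y := by
          simpa [hinner] using hT 1 y
        have : y * star (T a) = y * star (a * T 1) := by
          rw [h1, ← h2, star_mul, mul_assoc]
        simp only [hd, star_sub, mul_sub, this, sub_self]
      have : d * star d = 0 := key d
      have hd0 : d = 0 := (CStarRing.mul_star_self_eq_zero_iff d).mp this
      exact sub_eq_zero.mp hd0
    have hone : ‖(1 : A)‖ = 1 := norm_one
    have hTge : ‖T‖ ≤ ‖T 1‖ := by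
      refine T.opNorm_le_bound (norm_nonneg _) fun a => ?_
      rw [hmul a, mul_comm ‖T 1‖]
      exact norm_mul_le _ _
    have hmem : ‖T 1‖ ∈ {r : ℝ | ∃ b : A, ‖b‖ = 1 ∧ r = ‖(inner A (T b) b : A)‖} := by
      refine ⟨1, hone, ?_⟩
      simp [hinner]
    have hub : ∀ r ∈ {r : ℝ | ∃ b : A, ‖b‖ = 1 ∧ r = ‖(inner A (T b) b : A)‖}, r ≤ ‖T‖ := by
      rintro r ⟨b, hb, rfl⟩
      calc ‖(inner A (T b) b : A)‖ = ‖b * star (T b)‖ := by rw [hinner]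
        _ ≤ ‖b‖ * ‖star (T b)‖ := norm_mul_le _ _
        _ = ‖T b‖ := by rw [norm_star, hb, one_mul]
        _ ≤ ‖T‖ * ‖b‖ := T.le_opNorm b
        _ = ‖T‖ := by rw [hb, mul_one]
    refine le_antisymm (Real.sSup_le hub (norm_nonneg T)) ?_
    calc ‖T‖ ≤ ‖T 1‖ := hTge
      _ ≤ numRadius T := le_csSup ⟨‖T‖, hub⟩ hmem
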